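/- For the SAPD problem whose objective is the weighted product of user capacities, an optimal solution must use maximum power for every user. Precisely: let p_1,…,p_n be measurable bounded PSDs on [0,W] with ∫_0^W p_i ≤ P_i and C_i(p) > 0 for every i, and suppose there is a user k with ∫_0^W p_k(x) dx < P_k. Then there exist measurable PSDs q_1,…,q_n : [0,W] → [0,∞) with ∫_0^W q_i ≤ P_i for every i such that the weighted product of capacities strictly increases: Π_i ω_i C_i(q) > Π_i ω_i C_i(p). -/

import Mathlib

open MeasureTheory Real

lemma integrableOn_of_bounded' {f : ℝ → ℝ} {s : Set ℝ} (hs : volume s ≠ ⊤)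
    (hm : Measurable f) {C : ℝ} (hb : ∀ x, |f x| ≤ C) : IntegrableOn f s := by
  refine Integrable.mono' (integrableOn_const hs)
    hm.aestronglyMeasurable (ae_of_all _ hb)

lemma exists_subset_volume_eq {A : Set ℝ} {W : ℝ} (hW : 0 ≤ W) (hA : MeasurableSet A)
    (hsub : A ⊆ Set.Ioc 0 W) {ε : ℝ} (hε0 : 0 ≤ ε)
    (hε : ε ≤ (volume A).toReal) :
    ∃ S : Set ℝ, S ⊆ A ∧ MeasurableSet S ∧ volume S = ENNReal.ofReal ε := by
  have hfin : ∀ t, volume (A ∩ Set.Iic t) ≠ ⊤ := by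
    intro t
    refine ne_top_of_le_ne_top (b := volume (Set.Ioc 0 W)) (by simp [Real.volume_Ioc])
      (measure_mono ?_)
    exact (Set.inter_subset_left).trans hsub
  set F : ℝ → ℝ := fun t => (volume (A ∩ Set.Iic t)).toReal with hFdef
  have hmono : Monotone F := by
    intro s t hst
    exact ENNReal.toReal_mono (hfin t)
      (measure_mono (Set.inter_subset_inter_right _ (Set.Iic_subset_Iic.2 hst)))
  have hlip : ∀ s t, s ≤ t → F t ≤ F s + (t - s) := by
    intro s t hst
    have hsub2 : A ∩ Set.Iic t ⊆ (A ∩ Set.Iic s) ∪ Set.Ioc s t := by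
      rintro x ⟨hxA, hxt⟩
      rcases le_or_gt x s with hxs | hxs
      · exact Or.inl ⟨hxA, hxs⟩
      · exact Or.inr ⟨hxs, hxt⟩
    have h1 : volume (A ∩ Set.Iic t) ≤ volume (A ∩ Set.Iic s) + ENNReal.ofReal (t - s) := by
      refine (measure_mono hsub2).trans ?_
      refine (measure_union_le _ _).trans ?_
      rw [Real.volume_Ioc]
    have h2 := ENNReal.toReal_mono (by simp [hfin s, ENNReal.add_ne_top]) h1
    rw [ENNReal.toReal_add (hfin s) (by simp), ENNReal.toReal_ofReal (by linarith)] at h2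
    exact h2
  have hcont : Continuous F := by
    refine LipschitzWith.continuous (K := 1) (LipschitzWith.of_dist_le_mul ?_)
    intro s t
    rw [Real.dist_eq, Real.dist_eq, NNReal.coe_one, one_mul]
    rcases le_total s t with hst | hst
    · rw [abs_sub_comm, abs_sub_comm s t]
      rw [abs_of_nonneg (sub_nonneg.2 (hmono hst)), abs_of_nonneg (sub_nonneg.2 hst)]
      have := hlip s t hst; linarith
    · rw [abs_of_nonneg (sub_nonneg.2 (hmono hst)), abs_of_nonneg (sub_nonneg.2 hst)]
      have := hlip t s hst; linarith
  have hF0 : F 0 = 0 := by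
    have : A ∩ Set.Iic 0 = ∅ := by
      ext x
      simp only [Set.mem_inter_iff, Set.mem_Iic, Set.mem_empty_iff_false, iff_false, not_and]
      intro hx
      exact not_le.2 (hsub hx).1
    simp [hFdef, this]
  have hFW : F W = (volume A).toReal := by
    have : A ∩ Set.Iic W = A := by
      apply Set.inter_eq_self_of_subset_left
      intro x hx; exact (hsub hx).2
    simp [hFdef, this]
  have hIVT := intermediate_value_Icc hW hcont.continuousOn
  have hmem : ε ∈ Set.Icc (F 0) (F W) := by
    rw [hF0, hFW]; exact ⟨hε0, hε⟩
  obtain ⟨t, -, ht⟩ := hIVT hmem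
  refine ⟨A ∩ Set.Iic t, Set.inter_subset_left, hA.inter measurableSet_Iic, ?_⟩
  rw [← ht, hFdef]
  exact (ENNReal.ofReal_toReal (hfin t)).symm

/-- Capacity of user `i` when the users transmit with PSDs `p`, treating
interference as noise: `C_i(p) = ∫_0^W log(1 + p_i(x) h_{ii}(x) / (Σ_{j≠i} p_j(x) h_{ji}(x) + N_i)) dx`.
Here `h j i x` is the channel gain from the transmitter of user `j` to the
receiver of user `i` at frequency `x`, and `N i` is the noise density of user `i`. -/
noncomputable def capacity {n : ℕ} (W : ℝ) (h : Fin n → Fin n → ℝ → ℝ)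
    (N : Fin n → ℝ) (p : Fin n → ℝ → ℝ) (i : Fin n) : ℝ :=
  ∫ x in (0:ℝ)..W,
    Real.log (1 + p i x * h i i x /
      ((∑ j ∈ Finset.univ.erase i, p j x * h j i x) + N i))

set_option maxHeartbeats 1600000
/-- for the weighted-product objective, any feasible PSD profile with
positive capacities in which some user `k` does not use its maximum power can be
strictly improved by another feasible PSD profile. -/
theorem max_power_weighted_product {n : ℕ} (W : ℝ) (hW : 0 < W)
    (h : Fin n → Fin n → ℝ → ℝ)
    (hmeas : ∀ j i, Measurable (h j i))
    (hnn : ∀ j i x, 0 ≤ h j i x)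
    (N P ω : Fin n → ℝ)
    (hN : ∀ i, 0 < N i) (hP : ∀ i, 0 < P i) (hω : ∀ i, 0 < ω i)
    (pmax hmax hmin : ℝ)
    (hhmin : 0 < hmin)
    (hgain : ∀ (i : Fin n) (x : ℝ), hmin ≤ h i i x ∧ h i i x ≤ hmax)
    (p : Fin n → ℝ → ℝ)
    (hpmeas : ∀ i, Measurable (p i))
    (hpnn : ∀ i x, 0 ≤ p i x)
    (hpbd : ∀ i x, p i x ≤ pmax)
    (hph : 0 < pmax * hmax)
    (hCpos : ∀ i, 0 < capacity W h N p i)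
    (k : Fin n)
    (hfeas : ∀ i, (∫ x in (0:ℝ)..W, p i x) ≤ P i)
    (hslack : (∫ x in (0:ℝ)..W, p k x) < P k) :
    ∃ q : Fin n → ℝ → ℝ,
      (∀ i, Measurable (q i)) ∧
      (∀ i x, 0 ≤ q i x) ∧
      (∀ i, (∫ x in (0:ℝ)..W, q i x) ≤ P i) ∧
      ∏ i, ω i * capacity W h N q i > ∏ i, ω i * capacity W h N p i := by
  classical
  have hVfin : volume (Set.Ioc (0:ℝ) W) ≠ ⊤ := by simp [Real.volume_Ioc]
  have h0max : 0 < hmax := lt_of_lt_of_le hhmin ((hgain k 0).1.trans (hgain k 0).2)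
  have hpmax0 : 0 ≤ pmax := (hpnn k 0).trans (hpbd k 0)
  -- abbreviation for the integrand
  set G : (Fin n → ℝ → ℝ) → Fin n → ℝ → ℝ := fun r i x =>
    Real.log (1 + r i x * h i i x / ((∑ j ∈ Finset.univ.erase i, r j x * h j i x) + N i))
    with hGdef
  have hcap : ∀ (r : Fin n → ℝ → ℝ) (i : Fin n),
      capacity W h N r i = ∫ x in Set.Ioc 0 W, G r i x := by
    intro r i
    rw [capacity, intervalIntegral.integral_of_le hW.le, hGdef]
  have hdenlb : ∀ (r : Fin n → ℝ → ℝ), (∀ j y, 0 ≤ r j y) → ∀ (i : Fin n) (x : ℝ),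
      N i ≤ (∑ j ∈ Finset.univ.erase i, r j x * h j i x) + N i := by
    intro r hr i x
    have : 0 ≤ ∑ j ∈ Finset.univ.erase i, r j x * h j i x :=
      Finset.sum_nonneg fun j _ => mul_nonneg (hr j x) (hnn j i x)
    linarith
  have hGnn : ∀ (r : Fin n → ℝ → ℝ), (∀ j y, 0 ≤ r j y) → ∀ (i : Fin n) (x : ℝ),
      0 ≤ G r i x := by
    intro r hr i x
    apply Real.log_nonneg
    have h1 : (0:ℝ) < (∑ j ∈ Finset.univ.erase i, r j x * h j i x) + N i :=
      lt_of_lt_of_le (hN i) (hdenlb r hr i x)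
    have h2 : 0 ≤ r i x * h i i x := mul_nonneg (hr i x) (hnn i i x)
    have h3 := div_nonneg h2 h1.le
    linarith
  have hGub : ∀ (r : Fin n → ℝ → ℝ), (∀ j y, 0 ≤ r j y) → ∀ (i : Fin n) (C : ℝ),
      (∀ x, r i x * h i i x ≤ C) → ∀ x,
      G r i x ≤ Real.log (1 + C / N i) := by
    intro r hr i C hC x
    have h1 : (0:ℝ) < (∑ j ∈ Finset.univ.erase i, r j x * h j i x) + N i :=
      lt_of_lt_of_le (hN i) (hdenlb r hr i x)
    have h2 : 0 ≤ r i x * h i i x := mul_nonneg (hr i x) (hnn i i x)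
    have h3 : 0 ≤ r i x * h i i x / ((∑ j ∈ Finset.univ.erase i, r j x * h j i x) + N i) :=
      div_nonneg h2 h1.le
    have h4 : r i x * h i i x / ((∑ j ∈ Finset.univ.erase i, r j x * h j i x) + N i)
        ≤ C / N i := div_le_div₀ (h2.trans (hC x)) (hC x) (hN i) (hdenlb r hr i x)
    exact Real.log_le_log (by linarith) (by linarith)
  have hGmeas : ∀ (r : Fin n → ℝ → ℝ), (∀ j, Measurable (r j)) → ∀ i, Measurable (G r i) := by
    intro r hr i
    apply Measurable.log
    apply Measurable.add measurable_const
    apply Measurable.div ((hr i).mul (hmeas i i))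
    apply Measurable.add ?_ measurable_const
    exact Finset.measurable_sum _ fun j _ => (hr j).mul (hmeas j i)
  have hGint : ∀ (r : Fin n → ℝ → ℝ), (∀ j y, 0 ≤ r j y) → (∀ j, Measurable (r j)) →
      ∀ (i : Fin n) (C : ℝ), (∀ x, r i x * h i i x ≤ C) →
      IntegrableOn (G r i) (Set.Ioc 0 W) := by
    intro r hr hrm i C hC
    refine integrableOn_of_bounded' hVfin (hGmeas r hrm i) (C := Real.log (1 + C / N i)) ?_
    intro x
    rw [abs_of_nonneg (hGnn r hr i x)]
    exact hGub r hr i C hC x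
  have hpC : ∀ (i : Fin n) (x : ℝ), p i x * h i i x ≤ pmax * hmax :=
    fun i x => mul_le_mul (hpbd i x) (hgain i x).2 (hnn i i x) hpmax0
  obtain ⟨B, hB⟩ := Finite.exists_le fun i => Real.log (1 + pmax * hmax / N i)
  have hBpos : 0 < B := by
    have h1 : 0 < pmax * hmax / N k := div_pos hph (hN k)
    exact lt_of_lt_of_le (Real.log_pos (by linarith)) (hB k)
  have hGpB : ∀ (i : Fin n) (x : ℝ), G p i x ≤ B :=
    fun i x => (hGub p hpnn i (pmax * hmax) (hpC i) x).trans (hB i)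
  -- minimum capacity
  obtain ⟨i₀, -, hi₀⟩ := Finset.exists_min_image Finset.univ
    (fun i => capacity W h N p i) ⟨k, Finset.mem_univ k⟩
  obtain ⟨m, hmdef⟩ : ∃ x : ℝ, x = capacity W h N p i₀ := ⟨_, rfl⟩
  have hm0 : 0 < m := hmdef ▸ hCpos i₀
  have hmle : ∀ i, m ≤ capacity W h N p i := fun i => hmdef ▸ hi₀ i (Finset.mem_univ i)
  -- power slack
  obtain ⟨δ, hδdef⟩ : ∃ x : ℝ, x = P k - ∫ x in Set.Ioc (0:ℝ) W, p k x := ⟨_, rfl⟩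
  have hδ0 : 0 < δ := by
    have h1 := hslack
    rw [intervalIntegral.integral_of_le hW.le] at h1
    rw [hδdef]; linarith
  -- interference of user k and a set where it is bounded
  set I : ℝ → ℝ := fun x => ∑ j ∈ Finset.univ.erase k, p j x * h j k x with hIdef
  have hImeas : Measurable I := Finset.measurable_sum _ fun j _ => (hpmeas j).mul (hmeas j k)
  set A : ℕ → Set ℝ := fun M => Set.Ioc 0 W ∩ {x | I x ≤ (M:ℝ)} with hAdef
  have hAmeas : ∀ M, MeasurableSet (A M) := fun M =>
    measurableSet_Ioc.inter (measurableSet_le hImeas measurable_const)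
  have hAunion : ⋃ M : ℕ, A M = Set.Ioc 0 W := by
    ext x
    simp only [hAdef, Set.mem_iUnion, Set.mem_inter_iff, Set.mem_setOf_eq]
    constructor
    · rintro ⟨M, hx, -⟩; exact hx
    · intro hx; exact ⟨⌈I x⌉₊, hx, Nat.le_ceil _⟩
  have hEx : ∃ M : ℕ, volume (A M) ≠ 0 := by
    by_contra hall
    push_neg at hall
    have h0 := measure_iUnion_null hall
    rw [hAunion, Real.volume_Ioc, ENNReal.ofReal_eq_zero] at h0
    linarith
  obtain ⟨M, hM⟩ := hEx
  have hAfin : volume (A M) ≠ ⊤ :=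
    ne_top_of_le_ne_top hVfin (measure_mono Set.inter_subset_left)
  have hvA : 0 < (volume (A M)).toReal := ENNReal.toReal_pos hM hAfin
  -- constants
  have hn1 : (1:ℝ) ≤ (n:ℝ) := by exact_mod_cast k.pos
  obtain ⟨K₀, hK₀def⟩ : ∃ x : ℝ, x = 2*(n:ℝ)*B*(capacity W h N p k)/m + 1 := ⟨_, rfl⟩
  have hK₀0 : 0 < K₀ := by
    have h1 : 0 < 2*(n:ℝ)*B*(capacity W h N p k)/m := by
      apply div_pos ?_ hm0
      exact mul_pos (mul_pos (mul_pos (by norm_num) (by linarith : (0:ℝ) < (n:ℝ))) hBpos)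
        (hCpos k)
    rw [hK₀def]; linarith
  have hMN : 0 < (M:ℝ) + N k := add_pos_of_nonneg_of_pos (Nat.cast_nonneg M) (hN k)
  obtain ⟨e₁, he₁def⟩ : ∃ x : ℝ, x = m / (2*(n:ℝ)*B) := ⟨_, rfl⟩
  obtain ⟨e₂, he₂def⟩ : ∃ x : ℝ, x = δ * hmin / (((M:ℝ) + N k) * Real.exp (B + K₀)) := ⟨_, rfl⟩
  have he₁0 : 0 < e₁ := by rw [he₁def]; exact div_pos hm0 (by nlinarith)
  have he₂0 : 0 < e₂ := by
    rw [he₂def]; exact div_pos (mul_pos hδ0 hhmin) (mul_pos hMN (Real.exp_pos _))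
  obtain ⟨ε, hεdef⟩ : ∃ x : ℝ, x = min (min e₁ e₂) ((volume (A M)).toReal) := ⟨_, rfl⟩
  have hε0 : 0 < ε := by rw [hεdef]; exact lt_min (lt_min he₁0 he₂0) hvA
  obtain ⟨S, hSA, hSmeas, hSvol⟩ := exists_subset_volume_eq (A := A M) hW.le (hAmeas M)
      Set.inter_subset_left hε0.le (le_of_eq_of_le hεdef (min_le_right _ _))
  have hSsub : S ⊆ Set.Ioc 0 W := hSA.trans Set.inter_subset_left
  have hSIle : ∀ x ∈ S, I x ≤ (M:ℝ) := fun x hx => (hSA hx).2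
  have hSvol' : (volume S).toReal = ε := by rw [hSvol, ENNReal.toReal_ofReal hε0.le]
  obtain ⟨c, hcdef⟩ : ∃ x : ℝ, x = δ / ε := ⟨_, rfl⟩
  have hc0 : 0 < c := by rw [hcdef]; exact div_pos hδ0 hε0
  -- the improved PSD profile
  set q : Fin n → ℝ → ℝ := fun j => if j = k then
      (fun x => p k x + S.indicator (fun _ => c) x) else p j with hqdef
  have hqk : ∀ x, q k x = p k x + S.indicator (fun _ => c) x := by
    intro x; simp [hqdef]
  have hqj : ∀ j, j ≠ k → q j = p j := by
    intro j hj; simp [hqdef, hj]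
  have hind_le : ∀ x, S.indicator (fun _ => c) x ≤ c := by
    intro x; by_cases hx : x ∈ S <;> simp [hx, hc0.le]
  have hind_nn : ∀ x : ℝ, 0 ≤ S.indicator (fun _ => c) x := by
    intro x; by_cases hx : x ∈ S <;> simp [hx, hc0.le]
  have hqge : ∀ j x, p j x ≤ q j x := by
    intro j x
    by_cases hj : j = k
    · subst hj; rw [hqk]; linarith [hind_nn x]
    · rw [hqj j hj]
  have hqnn : ∀ j x, 0 ≤ q j x := fun j x => (hpnn j x).trans (hqge j x)
  have hqub : ∀ j x, q j x ≤ pmax + c := by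
    intro j x
    by_cases hj : j = k
    · rw [hj, hqk]; have h1 := hind_le x; have h2 := hpbd k x; linarith
    · rw [hqj j hj]; have h2 := hpbd j x; linarith
  have hqoff : ∀ j x, x ∉ S → q j x = p j x := by
    intro j x hx
    by_cases hj : j = k
    · subst hj; rw [hqk, Set.indicator_of_notMem hx, add_zero]
    · rw [hqj j hj]
  have hqmeas : ∀ j, Measurable (q j) := by
    intro j
    by_cases hj : j = k
    · rw [hj]
      have hqkf : q k = fun x => p k x + S.indicator (fun _ => c) x := funext hqk
      rw [hqkf]
      exact (hpmeas k).add (measurable_const.indicator hSmeas)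
    · rw [hqj j hj]; exact hpmeas j
  have hpint : ∀ i, IntegrableOn (p i) (Set.Ioc 0 W) := by
    intro i
    refine integrableOn_of_bounded' hVfin (hpmeas i) (C := pmax) ?_
    intro x; rw [abs_of_nonneg (hpnn i x)]; exact hpbd i x
  -- feasibility of q
  have hqfeas : ∀ i, (∫ x in (0:ℝ)..W, q i x) ≤ P i := by
    intro i
    by_cases hi : i = k
    · rw [hi, intervalIntegral.integral_of_le hW.le]
      have hcalc : (∫ x in Set.Ioc 0 W, q k x) = (∫ x in Set.Ioc 0 W, p k x) + δ := by
        calc (∫ x in Set.Ioc 0 W, q k x)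
            = ∫ x in Set.Ioc 0 W, (p k x + S.indicator (fun _ => c) x) :=
              setIntegral_congr_fun measurableSet_Ioc fun x _ => hqk x
          _ = (∫ x in Set.Ioc 0 W, p k x) + ∫ x in Set.Ioc 0 W, S.indicator (fun _ => c) x :=
              integral_add (hpint k)
                ((integrableOn_const hVfin).indicator hSmeas)
          _ = (∫ x in Set.Ioc 0 W, p k x) + δ := by
              rw [setIntegral_indicator hSmeas,
                Set.inter_eq_self_of_subset_right hSsub, setIntegral_const,
                measureReal_def, hSvol', smul_eq_mul, hcdef, mul_div_cancel₀ δ hε0.ne']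
      rw [hcalc, hδdef]; linarith
    · rw [hqj i hi]; exact hfeas i
  -- pointwise estimates
  have hdenmono : ∀ (i : Fin n) (x : ℝ),
      (∑ j ∈ Finset.univ.erase i, p j x * h j i x)
        ≤ ∑ j ∈ Finset.univ.erase i, q j x * h j i x :=
    fun i x => Finset.sum_le_sum fun j _ => mul_le_mul_of_nonneg_right (hqge j x) (hnn j i x)
  have hGq_le_Gp : ∀ (i : Fin n), i ≠ k → ∀ x, G q i x ≤ G p i x := by
    intro i hi x
    simp only [hGdef]
    have hd1 : (0:ℝ) < (∑ j ∈ Finset.univ.erase i, p j x * h j i x) + N i :=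
      lt_of_lt_of_le (hN i) (hdenlb p hpnn i x)
    have hd2 : (∑ j ∈ Finset.univ.erase i, p j x * h j i x) + N i ≤
        (∑ j ∈ Finset.univ.erase i, q j x * h j i x) + N i := by
      have := hdenmono i x; linarith
    have hnum : q i x = p i x := by rw [hqj i hi]
    have h2 : 0 ≤ p i x * h i i x := mul_nonneg (hpnn i x) (hnn i i x)
    have h4 : q i x * h i i x / ((∑ j ∈ Finset.univ.erase i, q j x * h j i x) + N i)
        ≤ p i x * h i i x / ((∑ j ∈ Finset.univ.erase i, p j x * h j i x) + N i) := by
      rw [hnum]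
      exact div_le_div₀ h2 le_rfl hd1 hd2
    have h5 : 0 ≤ q i x * h i i x / ((∑ j ∈ Finset.univ.erase i, q j x * h j i x) + N i) :=
      div_nonneg (mul_nonneg (hqnn i x) (hnn i i x)) (by linarith)
    exact Real.log_le_log (by linarith) (by linarith)
  have hLlb : ∀ x ∈ S, Real.log (1 + c * hmin / ((M:ℝ) + N k)) ≤ G q k x := by
    intro x hx
    simp only [hGdef]
    have hdq : (∑ j ∈ Finset.univ.erase k, q j x * h j k x) + N k ≤ (M:ℝ) + N k := by
      have hsum : (∑ j ∈ Finset.univ.erase k, q j x * h j k x) = I x := by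
        rw [hIdef]
        exact Finset.sum_congr rfl fun j hj => by
          rw [hqj j (Finset.ne_of_mem_erase hj)]
      rw [hsum]
      have := hSIle x hx; linarith
    have hdq0 : (0:ℝ) < (∑ j ∈ Finset.univ.erase k, q j x * h j k x) + N k :=
      lt_of_lt_of_le (hN k) (hdenlb q hqnn k x)
    have hnum : c * hmin ≤ q k x * h k k x := by
      have h1 : c ≤ q k x := by
        rw [hqk, Set.indicator_of_mem hx]
        have := hpnn k x; linarith
      exact mul_le_mul h1 (hgain k x).1 hhmin.le ((hpnn k x).trans (hqge k x))
    have h4 : c * hmin / ((M:ℝ) + N k)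
        ≤ q k x * h k k x / ((∑ j ∈ Finset.univ.erase k, q j x * h j k x) + N k) :=
      div_le_div₀ (mul_nonneg (hqnn k x) (hnn k k x)) hnum hdq0 hdq
    have h5 : 0 < c * hmin / ((M:ℝ) + N k) := div_pos (mul_pos hc0 hhmin) hMN
    exact Real.log_le_log (by linarith) (by linarith)
  have hGoff : ∀ (i : Fin n) (x : ℝ), x ∉ S → G q i x = G p i x := by
    intro i x hx
    simp only [hGdef]
    have hqp : ∀ j, q j x = p j x := fun j => hqoff j x hx
    simp only [hqp]
  have hqC : ∀ (i : Fin n) (x : ℝ), q i x * h i i x ≤ (pmax + c) * hmax :=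
    fun i x => mul_le_mul (hqub i x) (hgain i x).2 (hnn i i x) (by linarith)
  have hGpint : ∀ i, IntegrableOn (G p i) (Set.Ioc 0 W) :=
    fun i => hGint p hpnn hpmeas i (pmax * hmax) (hpC i)
  have hGqint : ∀ i, IntegrableOn (G q i) (Set.Ioc 0 W) :=
    fun i => hGint q hqnn hqmeas i ((pmax + c) * hmax) (hqC i)
  -- splitting integrals over S
  have hsplit : ∀ u v : ℝ → ℝ, IntegrableOn u (Set.Ioc 0 W) → IntegrableOn v (Set.Ioc 0 W) →
      (∀ x, x ∉ S → u x = v x) →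
      (∫ x in Set.Ioc (0:ℝ) W, u x) - (∫ x in Set.Ioc (0:ℝ) W, v x)
        = ∫ x in S, (u x - v x) := by
    intro u v hu hv heq
    have huv : IntegrableOn (fun x => u x - v x) (Set.Ioc 0 W) := hu.sub hv
    rw [← integral_sub hu hv, ← integral_inter_add_diff (μ := volume) hSmeas huv]
    have h1 : Set.Ioc (0:ℝ) W ∩ S = S := Set.inter_eq_self_of_subset_right hSsub
    have h2 : (∫ x in Set.Ioc (0:ℝ) W \ S, (u x - v x)) = 0 := by
      rw [setIntegral_congr_fun (g := fun _ => (0:ℝ)) (measurableSet_Ioc.diff hSmeas)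
        (fun x hx => by rw [heq x hx.2]; ring)]
      simp
    rw [h1, h2, add_zero]
  have hSconst_int : ∀ C : ℝ, IntegrableOn (fun _ => C) S :=
    fun C => integrableOn_const ((measure_mono hSsub).trans_lt hVfin.lt_top).ne
  -- E1: other users lose at most B * ε
  have hE1 : ∀ i, i ≠ k → capacity W h N p i - B * ε ≤ capacity W h N q i := by
    intro i hi
    rw [hcap p i, hcap q i]
    have hdiff := hsplit (G p i) (G q i) (hGpint i) (hGqint i)
      (fun x hx => (hGoff i x hx).symm)
    have hbd : (∫ x in S, (G p i x - G q i x)) ≤ B * ε := by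
      calc (∫ x in S, (G p i x - G q i x)) ≤ ∫ x in S, B := by
            refine setIntegral_mono_on
              (((hGpint i).mono_set hSsub).sub ((hGqint i).mono_set hSsub))
              (hSconst_int B) hSmeas ?_
            intro x hx
            have h1 := hGnn q hqnn i x
            have h2 := hGpB i x
            linarith
        _ = (volume S).toReal • B := setIntegral_const B
        _ = B * ε := by rw [hSvol', smul_eq_mul, mul_comm]
    linarith
  -- E2: user k gains at least (L - B) * ε
  obtain ⟨L, hLdef⟩ : ∃ x : ℝ, x = Real.log (1 + c * hmin / ((M:ℝ) + N k)) := ⟨_, rfl⟩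
  have hE2 : capacity W h N p k + (L - B) * ε ≤ capacity W h N q k := by
    rw [hcap p k, hcap q k]
    have hdiff := hsplit (G q k) (G p k) (hGqint k) (hGpint k) (fun x hx => hGoff k x hx)
    have hbd : (L - B) * ε ≤ ∫ x in S, (G q k x - G p k x) := by
      calc (L - B) * ε = (volume S).toReal • (L - B) := by
            rw [hSvol', smul_eq_mul, mul_comm]
        _ = ∫ x in S, (L - B) := (setIntegral_const _).symm
        _ ≤ ∫ x in S, (G q k x - G p k x) := by
            refine setIntegral_mono_on (hSconst_int (L - B))
              (((hGqint k).mono_set hSsub).sub ((hGpint k).mono_set hSsub)) hSmeas ?_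
            intro x hx
            have h1 := hLlb x hx
            have h2 := hGpB k x
            rw [hLdef]
            linarith
    linarith
  -- lower bound on L
  have hLge : B + K₀ ≤ L := by
    have hεe₂ : ε ≤ e₂ :=
      le_of_eq_of_le hεdef ((min_le_left _ _).trans (min_le_right _ _))
    have hkey : Real.exp (B + K₀) ≤ c * hmin / ((M:ℝ) + N k) := by
      have h1 : ε * (((M:ℝ) + N k) * Real.exp (B + K₀)) ≤ δ * hmin := by
        rw [he₂def] at hεe₂
        exact (le_div_iff₀ (mul_pos hMN (Real.exp_pos _))).1 hεe₂
      rw [hcdef, div_mul_eq_mul_div, div_div, le_div_iff₀ (by positivity)]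
      nlinarith [h1]
    calc B + K₀ = Real.log (Real.exp (B + K₀)) := (Real.log_exp _).symm
      _ ≤ L := by
          rw [hLdef]
          exact Real.log_le_log (Real.exp_pos _)
            (by nlinarith [hkey, Real.exp_pos (B + K₀)])
  -- arithmetic setup
  obtain ⟨a, hadef⟩ : ∃ x : ℝ, x = (n:ℝ) * ε * B / m := ⟨_, rfl⟩
  have hεBm_nn : 0 ≤ ε * B / m := div_nonneg (mul_nonneg hε0.le hBpos.le) hm0.le
  have ha0 : 0 ≤ a := by
    rw [hadef]
    exact div_nonneg (mul_nonneg (mul_nonneg (by linarith) hε0.le) hBpos.le) hm0.le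
  have ha2 : a ≤ 1/2 := by
    have hεe₁ : ε ≤ e₁ :=
      le_of_eq_of_le hεdef ((min_le_left _ _).trans (min_le_left _ _))
    have h1 : ε * (2*(n:ℝ)*B) ≤ m := by
      rw [he₁def] at hεe₁
      exact (le_div_iff₀ (by nlinarith)).1 hεe₁
    rw [hadef, div_le_iff₀ hm0]
    nlinarith
  have hεBm : ε * B / m ≤ a := by
    rw [hadef, div_le_div_iff₀ hm0 hm0]
    nlinarith [mul_nonneg (mul_nonneg hε0.le hBpos.le) hm0.le, hn1]
  obtain ⟨r, hrdef⟩ : ∃ x : ℝ, x = 1 - ε * B / m := ⟨_, rfl⟩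
  have hr0 : 0 ≤ r := by rw [hrdef]; linarith
  -- per-factor estimate for i ≠ k
  have hfac : ∀ i, i ≠ k → capacity W h N p i * r ≤ capacity W h N q i := by
    intro i hi
    have h1 := hE1 i hi
    have h2 := hmle i
    have h3 : m * (ε * B / m) = ε * B := by field_simp
    have h4 : m * (ε * B / m) ≤ capacity W h N p i * (ε * B / m) :=
      mul_le_mul_of_nonneg_right h2 hεBm_nn
    have h5 : capacity W h N p i * r
        = capacity W h N p i - capacity W h N p i * (ε * B / m) := by
      rw [hrdef]; ring
    linarith only [h1, h2, h3, h4, h5]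
  -- product over the other users
  have hprodp_pos : 0 < ∏ i ∈ Finset.univ.erase k, (ω i * capacity W h N p i) :=
    Finset.prod_pos fun i _ => mul_pos (hω i) (hCpos i)
  have hstep1 : r ^ (Finset.univ.erase k).card
      * ∏ i ∈ Finset.univ.erase k, (ω i * capacity W h N p i)
      ≤ ∏ i ∈ Finset.univ.erase k, (ω i * capacity W h N q i) := by
    calc r ^ (Finset.univ.erase k).card
        * ∏ i ∈ Finset.univ.erase k, (ω i * capacity W h N p i)
        = ∏ i ∈ Finset.univ.erase k, (r * (ω i * capacity W h N p i)) := by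
          simp only [Finset.prod_mul_distrib, Finset.prod_const, mul_assoc]
      _ ≤ ∏ i ∈ Finset.univ.erase k, (ω i * capacity W h N q i) := by
          apply Finset.prod_le_prod
          · intro i _
            exact mul_nonneg hr0 (mul_pos (hω i) (hCpos i)).le
          · intro i hi
            have hik : i ≠ k := Finset.ne_of_mem_erase hi
            have h6 := hfac i hik
            calc r * (ω i * capacity W h N p i)
                = ω i * (capacity W h N p i * r) := by ring
              _ ≤ ω i * capacity W h N q i :=
                  mul_le_mul_of_nonneg_left h6 (hω i).le
  have hcard : ((Finset.univ.erase k).card : ℝ) ≤ (n:ℝ) := by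
    have h7 : (Finset.univ.erase k).card ≤ n := by
      have := Finset.card_erase_of_mem (Finset.mem_univ k)
      rw [this, Finset.card_univ, Fintype.card_fin]
      omega
    exact_mod_cast h7
  have hbern : 1 - a ≤ r ^ (Finset.univ.erase k).card := by
    have h8 := one_add_mul_le_pow (a := -(ε * B / m))
      (by linarith) (Finset.univ.erase k).card
    have heq : (1 + -(ε * B / m)) = r := by rw [hrdef]; ring
    rw [heq] at h8
    have h9 : 1 - a ≤ 1 + ((Finset.univ.erase k).card : ℝ) * (-(ε * B / m)) := by
      have h10 := mul_le_mul_of_nonneg_right hcard hεBm_nn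
      have h11 : (n:ℝ) * (ε * B / m) = a := by rw [hadef]; ring
      nlinarith
    linarith
  -- lower bound for capacity of user k
  have hCqk : capacity W h N p k + 2*a*(capacity W h N p k) + ε ≤ capacity W h N q k := by
    have h1 : K₀ ≤ L - B := by linarith
    have h2 : ε * K₀ = 2*a*(capacity W h N p k) + ε := by
      rw [hK₀def, hadef]
      field_simp
    nlinarith [hE2, mul_le_mul_of_nonneg_right h1 hε0.le]
  have hCqk_pos : 0 < capacity W h N q k := by
    nlinarith [hCpos k, mul_nonneg ha0 (hCpos k).le]
  have hkey : capacity W h N p k < capacity W h N q k * (1 - a) := by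
    nlinarith [mul_le_mul_of_nonneg_right hCqk (by linarith : (0:ℝ) ≤ 1 - a),
      hCpos k, mul_nonneg ha0 (hCpos k).le]
  refine ⟨q, hqmeas, hqnn, hqfeas, ?_⟩
  rw [gt_iff_lt, ← Finset.mul_prod_erase Finset.univ _ (Finset.mem_univ k),
      ← Finset.mul_prod_erase Finset.univ _ (Finset.mem_univ k)]
  calc ω k * capacity W h N p k * ∏ i ∈ Finset.univ.erase k, (ω i * capacity W h N p i)
      < ω k * (capacity W h N q k * (1 - a))
        * ∏ i ∈ Finset.univ.erase k, (ω i * capacity W h N p i) :=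
        mul_lt_mul_of_pos_right (mul_lt_mul_of_pos_left hkey (hω k)) hprodp_pos
    _ = (ω k * capacity W h N q k)
        * ((1 - a) * ∏ i ∈ Finset.univ.erase k, (ω i * capacity W h N p i)) := by ring
    _ ≤ (ω k * capacity W h N q k)
        * ∏ i ∈ Finset.univ.erase k, (ω i * capacity W h N q i) := by
        refine mul_le_mul_of_nonneg_left ?_ (mul_pos (hω k) hCqk_pos).le
        refine le_trans ?_ hstep1
        exact mul_le_mul_of_nonneg_right hbern hprodp_pos.le
    _ = ω k * capacity W h N q k
        * ∏ i ∈ Finset.univ.erase k, (ω i * capacity W h N q i) := by ring
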